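/- arXiv:2410.17129 — 4 statements merged into one kernel-verified Lean document; each statement's English description precedes it below -/
import Mathlib

section
/- For every n ≥ 1 there is a group isomorphism from the presented group ⟨a,b ∣ (ab)^n = (ba)^n⟩ to the presented group ⟨x,t ∣ x^n = t x^n t⁻¹⟩ sending a ↦ x t⁻¹ and b ↦ t. -/
/-- The single relation `(ab)^n = (ba)^n`, with `a = true` and `b = false`. -/
def relsAB (n : ℕ) : Set (FreeGroup Bool) :=
  {(FreeGroup.of true * FreeGroup.of false) ^ n *
    ((FreeGroup.of false * FreeGroup.of true) ^ n)⁻¹}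

/-- The single relation `x^n = t x^n t⁻¹`, with `x = true` and `t = false`. -/
def relsXT (n : ℕ) : Set (FreeGroup Bool) :=
  {(FreeGroup.of true) ^ n *
    (FreeGroup.of false * (FreeGroup.of true) ^ n * (FreeGroup.of false)⁻¹)⁻¹}

lemma rel_eq_one {α : Type*} {rels : Set (FreeGroup α)} {r : FreeGroup α} (hr : r ∈ rels) :
    (QuotientGroup.mk r : PresentedGroup rels) = 1 :=
  (QuotientGroup.eq_one_iff r).mpr (Subgroup.subset_normalClosure hr)

lemma relXT_holds (n : ℕ) :
    (PresentedGroup.of true : PresentedGroup (relsXT n)) ^ n =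
      PresentedGroup.of false * (PresentedGroup.of true) ^ n * (PresentedGroup.of false)⁻¹ := by
  have h := rel_eq_one (rels := relsXT n) (r := (FreeGroup.of true) ^ n *
    (FreeGroup.of false * (FreeGroup.of true) ^ n * (FreeGroup.of false)⁻¹)⁻¹) rfl
  have : ((QuotientGroup.mk ((FreeGroup.of true) ^ n *
      (FreeGroup.of false * (FreeGroup.of true) ^ n * (FreeGroup.of false)⁻¹)⁻¹)) :
      PresentedGroup (relsXT n)) =
      (PresentedGroup.of true) ^ n *
        (PresentedGroup.of false * (PresentedGroup.of true) ^ n *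
          (PresentedGroup.of false)⁻¹)⁻¹ := rfl
  rw [this] at h
  have h2 := mul_inv_eq_one.mp h
  exact h2

lemma relAB_holds (n : ℕ) :
    ((PresentedGroup.of true * PresentedGroup.of false : PresentedGroup (relsAB n))) ^ n =
      (PresentedGroup.of false * PresentedGroup.of true) ^ n := by
  have h := rel_eq_one (rels := relsAB n) (r := (FreeGroup.of true * FreeGroup.of false) ^ n *
    ((FreeGroup.of false * FreeGroup.of true) ^ n)⁻¹) rfl
  have : ((QuotientGroup.mk ((FreeGroup.of true * FreeGroup.of false) ^ n *
      ((FreeGroup.of false * FreeGroup.of true) ^ n)⁻¹)) : PresentedGroup (relsAB n)) =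
      (PresentedGroup.of true * PresentedGroup.of false) ^ n *
        ((PresentedGroup.of false * PresentedGroup.of true) ^ n)⁻¹ := rfl
  rw [this] at h
  exact mul_inv_eq_one.mp h

/-- For every `n ≥ 1` there is a group isomorphism
`⟨a,b ∣ (ab)^n = (ba)^n⟩ ≃ ⟨x,t ∣ x^n = t x^n t⁻¹⟩` with `a ↦ x t⁻¹` and `b ↦ t`. -/
theorem presentedGroup_ab_iso_xt (n : ℕ) (hn : 1 ≤ n) :
    ∃ e : PresentedGroup (relsAB n) ≃* PresentedGroup (relsXT n),
      e (PresentedGroup.of true) =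
        PresentedGroup.of true * (PresentedGroup.of false)⁻¹ ∧
      e (PresentedGroup.of false) = PresentedGroup.of false := by
  set X := (PresentedGroup.of true : PresentedGroup (relsXT n))
  set T := (PresentedGroup.of false : PresentedGroup (relsXT n))
  set A := (PresentedGroup.of true : PresentedGroup (relsAB n))
  set B := (PresentedGroup.of false : PresentedGroup (relsAB n))
  have hf : ∀ r ∈ relsAB n,
      FreeGroup.lift (fun b => if b then X * T⁻¹ else T) r = 1 := by
    rintro r rfl
    simp only [map_mul, map_pow, map_inv, FreeGroup.lift_apply_of, if_true, if_false, Bool.false_eq_true, reduceIte]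
    have hx := relXT_holds n
    have h1 : (X * T⁻¹ * T) ^ n = X ^ n := by group
    have h2 : (T * (X * T⁻¹)) ^ n = T * X ^ n * T⁻¹ := by
      rw [show T * (X * T⁻¹) = T * X * T⁻¹ by group, conj_pow]
    rw [h1, h2, ← hx]
    group
    simp [X]
  have hg : ∀ r ∈ relsXT n,
      FreeGroup.lift (fun b => if b then A * B else B) r = 1 := by
    rintro r rfl
    simp only [map_mul, map_pow, map_inv, FreeGroup.lift_apply_of, if_true, if_false, Bool.false_eq_true, reduceIte]
    have h2 : B * (A * B) ^ n * B⁻¹ = (B * A) ^ n := by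
      rw [← conj_pow]
      congr 1
      group
    rw [h2, ← relAB_holds n]
    group
    simp [A, B]
  let f := PresentedGroup.toGroup hf
  let g := PresentedGroup.toGroup hg
  have hgf : g.comp f = MonoidHom.id _ := by
    apply PresentedGroup.ext
    intro x
    cases x <;>
      simp [f, g, PresentedGroup.toGroup.of, A, B, X, T]
  have hfg : f.comp g = MonoidHom.id _ := by
    apply PresentedGroup.ext
    intro x
    cases x <;>
      simp [f, g, PresentedGroup.toGroup.of, A, B, X, T]
  refine ⟨MonoidHom.toMulEquiv f g hgf hfg, ?_, ?_⟩ <;>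
    simp [f, A, B, X, T, MonoidHom.toMulEquiv, PresentedGroup.toGroup.of]
end

section
/- Let Γ be any defining graph, A_Γ the associated Artin group, s a standard generator, and g ∈ A_Γ such that g ⟨s⟩ g⁻¹ ⊆ ⟨s⟩ (conjugation by g maps the cyclic subgroup generated by s into itself). Then g s g⁻¹ = s, i.e., g centralizes s. -/
/-- The alternating product `a * b * a * ⋯` with `n` factors. -/
def altProd {M : Type*} [Monoid M] : M → M → ℕ → M
  | _, _, 0 => 1
  | a, b, n + 1 => a * altProd b a n

/-- A defining graph: a finite simplicial graph with each edge labelled by a natural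
number `≥ 2`. -/
structure DefiningGraph (V : Type*) where
  graph : SimpleGraph V
  label : V → V → ℕ
  label_symm : ∀ a b, label a b = label b a
  two_le_label : ∀ a b, graph.Adj a b → 2 ≤ label a b

/-- The Artin relations `π(a,b;m_ab) = π(b,a;m_ab)`, one for each edge `{a,b}` of the
defining graph. -/
def DefiningGraph.rels {V : Type*} (Γ : DefiningGraph V) : Set (FreeGroup V) :=
  {r | ∃ a b, Γ.graph.Adj a b ∧
    r = altProd (FreeGroup.of a) (FreeGroup.of b) (Γ.label a b) *
      (altProd (FreeGroup.of b) (FreeGroup.of a) (Γ.label a b))⁻¹}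

/-- The Artin group of a defining graph, as a presented group. The standard generator
corresponding to a vertex `v` is `PresentedGroup.of v`. -/
abbrev ArtinGroup {V : Type*} (Γ : DefiningGraph V) : Type _ := PresentedGroup Γ.rels

lemma map_altProd {M N : Type*} [Monoid M] [Monoid N] (f : M →* N) (a b : M) (n : ℕ) :
    f (altProd a b n) = altProd (f a) (f b) n := by
  induction n generalizing a b with
  | zero => simp [altProd]
  | succ n ih => simp [altProd, ih]

lemma altProd_const {M : Type*} [Monoid M] (t : M) (n : ℕ) :
    altProd t t n = t ^ n := by
  induction n with
  | zero => simp [altProd]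
  | succ n ih => simp [altProd, ih, pow_succ']

/-- The exponent-sum homomorphism. -/
noncomputable def lenHom {V : Type*} (Γ : DefiningGraph V) :
    ArtinGroup Γ →* Multiplicative ℤ :=
  PresentedGroup.toGroup (f := fun _ : V => Multiplicative.ofAdd (1 : ℤ)) (by
    rintro r ⟨a, b, _, rfl⟩
    have key : ∀ (x y : V) (n : ℕ),
        FreeGroup.lift (fun _ : V => Multiplicative.ofAdd (1 : ℤ))
          (altProd (FreeGroup.of x) (FreeGroup.of y) n) = Multiplicative.ofAdd (n : ℤ) := by
      intro x y n
      rw [map_altProd, FreeGroup.lift_apply_of, FreeGroup.lift_apply_of, altProd_const]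
      simp [← ofAdd_nsmul]
    simp [key])

/-- If conjugation by `g` maps the cyclic subgroup `⟨s⟩` generated by a standard generator
into itself, then `g` centralizes `s`. -/
theorem centralizes_of_conj_cyclic_le {V : Type*} [Fintype V] (Γ : DefiningGraph V)
    (s : V) (g : ArtinGroup Γ)
    (h : ∀ x ∈ Subgroup.closure {(PresentedGroup.of s : ArtinGroup Γ)},
      g * x * g⁻¹ ∈ Subgroup.closure {(PresentedGroup.of s : ArtinGroup Γ)}) :
    g * PresentedGroup.of s * g⁻¹ = PresentedGroup.of s := by
  have hs : (PresentedGroup.of s : ArtinGroup Γ) ∈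
      Subgroup.closure {(PresentedGroup.of s : ArtinGroup Γ)} :=
    Subgroup.subset_closure rfl
  obtain ⟨k, hk⟩ := Subgroup.mem_closure_singleton.mp (h _ hs)
  have hφs : lenHom Γ (PresentedGroup.of s) = Multiplicative.ofAdd (1 : ℤ) :=
    PresentedGroup.toGroup.of ..
  have := congrArg (lenHom Γ) hk
  rw [map_zpow, map_mul, map_mul, map_inv, hφs] at this
  have h1 : Multiplicative.ofAdd (1 : ℤ) ^ k = Multiplicative.ofAdd (1 : ℤ) := by
    rw [this]; exact mul_inv_cancel_comm _ _
  have : k = 1 := by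
    have := congrArg Multiplicative.toAdd h1
    simpa using this
  rw [this, zpow_one] at hk
  exact hk.symm
end

section
/- Let Γ be any defining graph, A_Γ the associated Artin group, s and t standard generators, and g ∈ A_Γ such that g t g⁻¹ ∈ ⟨s⟩. Then g t g⁻¹ = s. -/
lemma lift_altProd {V : Type*} (f : V → Multiplicative ℤ)
    (hf : ∀ v, f v = Multiplicative.ofAdd 1) (a b : V) (n : ℕ) :
    FreeGroup.lift f (altProd (FreeGroup.of a) (FreeGroup.of b) n) =
      Multiplicative.ofAdd (n : ℤ) := by
  induction n generalizing a b with
  | zero => simp [altProd]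
  | succ n ih =>
    rw [altProd, map_mul, FreeGroup.lift_apply_of, hf, ih]
    rw [← ofAdd_add]
    push_cast
    ring_nf

/-- If a conjugate of the standard generator `t` lies in the cyclic subgroup `⟨s⟩` generated
by the standard generator `s`, then that conjugate equals `s`. -/
theorem conj_eq_of_conj_mem_cyclic {V : Type*} [Fintype V] (Γ : DefiningGraph V)
    (s t : V) (g : ArtinGroup Γ)
    (h : g * PresentedGroup.of t * g⁻¹ ∈
      Subgroup.closure {(PresentedGroup.of s : ArtinGroup Γ)}) :
    g * PresentedGroup.of t * g⁻¹ = PresentedGroup.of s := by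
  obtain ⟨n, hn⟩ := Subgroup.mem_closure_singleton.mp h
  have hrel : ∀ r ∈ Γ.rels,
      FreeGroup.lift (fun _ : V => Multiplicative.ofAdd (1 : ℤ)) r = 1 := by
    rintro r ⟨a, b, -, rfl⟩
    rw [map_mul, map_inv, lift_altProd _ (fun _ => rfl),
      lift_altProd _ (fun _ => rfl), mul_inv_cancel]
  let φ : ArtinGroup Γ →* Multiplicative ℤ := PresentedGroup.toGroup hrel
  have hφof : ∀ v : V, φ (PresentedGroup.of v) = Multiplicative.ofAdd 1 :=
    fun v => PresentedGroup.toGroup.of hrel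
  have h1 : φ (g * PresentedGroup.of t * g⁻¹) = Multiplicative.ofAdd 1 := by
    rw [map_mul, map_mul, map_inv, hφof, mul_comm (φ g), mul_assoc,
      mul_inv_cancel, mul_one]
  have h2 : φ (PresentedGroup.of s ^ n) = Multiplicative.ofAdd n := by
    rw [map_zpow, hφof, ← ofAdd_zsmul, smul_eq_mul, mul_one]
  have hne : Multiplicative.ofAdd n = Multiplicative.ofAdd (1 : ℤ) := by
    rw [← h2, hn, h1]
  have : n = 1 := Multiplicative.ofAdd.injective hne
  rw [← hn, this, zpow_one]
end

section
/- Let A_Γ be a large-type Artin group, let s, t be standard generators, and let g ∈ A_Γ satisfy g ⟨t⟩ g⁻¹ ⊆ ⟨s⟩. Then there exist n ≥ 0 and vertices s = s₀, s₁, ..., s_n = t of Γ such that each pair {s_i, s_{i+1}} is an edge of Γ with odd label, and g ∈ Z_{A_Γ}(s) · Δ_{s₀ s₁} Δ_{s₁ s₂} ··· Δ_{s_{n-1} s_n}, where Z_{A_Γ}(s) is the centralizer of s in A_Γ and Δ_{uv} denotes the image in A_Γ of the alternating word uvu··· with m_{uv} letters. -/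
/-- The Garside-type element `Δ_{uv}`: the image in the Artin group of the alternating word
`uvu⋯` with `m_{uv}` letters. -/
def bigDelta {V : Type*} (Γ : DefiningGraph V) (u v : V) : ArtinGroup Γ :=
  altProd (PresentedGroup.of u) (PresentedGroup.of v) (Γ.label u v)

section AuxAltProd
variable {M N : Type*} [Monoid M] [Monoid N]

lemma altProd_map (φ : M →* N) : ∀ (n : ℕ) (a b : M),
    φ (altProd a b n) = altProd (φ a) (φ b) n
  | 0, _, _ => by simp [altProd]
  | n + 1, a, b => by simp [altProd, altProd_map φ n b a]

lemma altProd_comm {M : Type*} [CommMonoid M] : ∀ (n : ℕ) (a b : M),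
    altProd a b n = a ^ ((n + 1) / 2) * b ^ (n / 2)
  | 0, _, _ => by simp [altProd]
  | n + 1, a, b => by
      rw [altProd, altProd_comm n b a]
      have h2 : (n + 2) / 2 = n / 2 + 1 := Nat.add_div_right n (by norm_num)
      rw [show n + 1 + 1 = n + 2 from rfl, h2, pow_succ]
      rw [mul_comm (a ^ (n/2)) a, mul_assoc]
      congr 1
      rw [mul_comm]

lemma altProd_succ_right : ∀ (n : ℕ) (a b : M),
    altProd a b (n + 1) = altProd a b n * (if Even n then a else b)
  | 0, _, _ => by simp [altProd]
  | n + 1, a, b => by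
      rw [show altProd a b (n + 1 + 1) = a * altProd b a (n + 1) from rfl,
        altProd_succ_right n b a, altProd]
      by_cases hn : Even n <;>
        simp [hn, Nat.even_add_one, mul_assoc]
end AuxAltProd

section ArtinAux
variable {V : Type*} (Γ : DefiningGraph V)

/-- The Artin relation holds in the Artin group. -/
lemma artin_rel {a b : V} (hadj : Γ.graph.Adj a b) :
    altProd (PresentedGroup.of a : ArtinGroup Γ) (PresentedGroup.of b) (Γ.label a b) =
      altProd (PresentedGroup.of b) (PresentedGroup.of a) (Γ.label a b) := by
  have hmem : altProd (FreeGroup.of a) (FreeGroup.of b) (Γ.label a b) *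
      (altProd (FreeGroup.of b) (FreeGroup.of a) (Γ.label a b))⁻¹ ∈
      Subgroup.normalClosure Γ.rels :=
    Subgroup.subset_normalClosure ⟨a, b, hadj, rfl⟩
  have h1 : PresentedGroup.mk Γ.rels
      (altProd (FreeGroup.of a) (FreeGroup.of b) (Γ.label a b) *
      (altProd (FreeGroup.of b) (FreeGroup.of a) (Γ.label a b))⁻¹) = 1 :=
    (QuotientGroup.eq_one_iff _).mpr hmem
  rw [map_mul, map_inv, mul_inv_eq_one] at h1
  rw [altProd_map (PresentedGroup.mk Γ.rels), altProd_map (PresentedGroup.mk Γ.rels)] at h1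
  exact h1

lemma delta_conj {u v : V} (hadj : Γ.graph.Adj u v) (hodd : Odd (Γ.label u v)) :
    bigDelta Γ u v * PresentedGroup.of v = PresentedGroup.of u * bigDelta Γ u v := by
  have hne : ¬ Even (Γ.label u v) := (Nat.not_even_iff_odd).mpr hodd
  have h1 := altProd_succ_right (Γ.label u v)
    (PresentedGroup.of u : ArtinGroup Γ) (PresentedGroup.of v)
  rw [if_neg hne] at h1
  have h2 : altProd (PresentedGroup.of u : ArtinGroup Γ) (PresentedGroup.of v)
      (Γ.label u v + 1) = PresentedGroup.of u *
      altProd (PresentedGroup.of v) (PresentedGroup.of u) (Γ.label u v) := rfl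
  simp only [bigDelta]
  rw [← h1, h2, ← artin_rel Γ hadj]

lemma chain_conj : ∀ (n : ℕ) (p : Fin (n + 1) → V),
    (∀ i : Fin n, Γ.graph.Adj (p i.castSucc) (p i.succ) ∧
      Odd (Γ.label (p i.castSucc) (p i.succ))) →
    (List.ofFn fun i : Fin n => bigDelta Γ (p i.castSucc) (p i.succ)).prod *
      PresentedGroup.of (p (Fin.last n)) =
    PresentedGroup.of (p 0) *
      (List.ofFn fun i : Fin n => bigDelta Γ (p i.castSucc) (p i.succ)).prod
  | 0, p, _ => by simp
  | n + 1, p, hp => by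
      have hq := chain_conj n (p ∘ Fin.succ) (fun i => hp i.succ)
      have hofn : (List.ofFn fun i : Fin (n + 1) =>
          bigDelta Γ (p i.castSucc) (p i.succ)) =
          bigDelta Γ (p 0) (p 1) :: (List.ofFn fun i : Fin n =>
            bigDelta Γ ((p ∘ Fin.succ) i.castSucc) ((p ∘ Fin.succ) i.succ)) :=
        List.ofFn_succ
      have hlast : p (Fin.last (n + 1)) = (p ∘ Fin.succ) (Fin.last n) := rfl
      have h0 : (p ∘ Fin.succ) (0 : Fin (n + 1)) = p 1 := rfl
      have hd : bigDelta Γ (p 0) (p 1) * PresentedGroup.of (p 1) =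
          PresentedGroup.of (p 0) * bigDelta Γ (p 0) (p 1) :=
        delta_conj Γ (hp 0).1 (hp 0).2
      rw [hofn, hlast, List.prod_cons, mul_assoc, hq, h0, ← mul_assoc, hd, mul_assoc]
end ArtinAux

/-- In a large-type Artin group, if `g ⟨t⟩ g⁻¹ ⊆ ⟨s⟩` for standard generators `s, t`, then
there is a path `s = s₀, s₁, …, s_n = t` through odd-labelled edges of `Γ`, and
`g ∈ Z_{A_Γ}(s) · Δ_{s₀s₁} Δ_{s₁s₂} ⋯ Δ_{s_{n-1}s_n}`. -/
theorem conjugator_decomposition {V : Type*} [Fintype V] (Γ : DefiningGraph V)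
    (hlarge : ∀ a b : V, Γ.graph.Adj a b → 3 ≤ Γ.label a b)
    (s t : V) (g : ArtinGroup Γ)
    (h : ∀ x ∈ Subgroup.closure {(PresentedGroup.of t : ArtinGroup Γ)},
      g * x * g⁻¹ ∈ Subgroup.closure {(PresentedGroup.of s : ArtinGroup Γ)}) :
    ∃ (n : ℕ) (p : Fin (n + 1) → V), p 0 = s ∧ p (Fin.last n) = t ∧
      (∀ i : Fin n, Γ.graph.Adj (p i.castSucc) (p i.succ) ∧
        Odd (Γ.label (p i.castSucc) (p i.succ))) ∧
      ∃ z ∈ Subgroup.centralizer {(PresentedGroup.of s : ArtinGroup Γ)},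
        g = z * (List.ofFn fun i : Fin n => bigDelta Γ (p i.castSucc) (p i.succ)).prod := by
  classical
  -- The length homomorphism
  have hlenrel : ∀ r ∈ Γ.rels, FreeGroup.lift
      (fun _ : V => Multiplicative.ofAdd (1 : ℤ)) r = 1 := by
    rintro r ⟨a, b, hadj, rfl⟩
    rw [map_mul, map_inv, altProd_map, altProd_map, FreeGroup.lift_apply_of, FreeGroup.lift_apply_of,
      altProd_comm, mul_inv_eq_one]
  set φ : ArtinGroup Γ →* Multiplicative ℤ := PresentedGroup.toGroup hlenrel with hφ
  -- g conjugates `of t` to `of s`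
  have hmem : g * PresentedGroup.of t * g⁻¹ ∈
      Subgroup.closure {(PresentedGroup.of s : ArtinGroup Γ)} :=
    h _ (Subgroup.subset_closure rfl)
  obtain ⟨k, hk⟩ := Subgroup.mem_closure_singleton.mp hmem
  have hφval : ∀ v : V, φ (PresentedGroup.of v) = Multiplicative.ofAdd (1 : ℤ) := fun v =>
    PresentedGroup.toGroup.of hlenrel
  have hk1 : k = 1 := by
    have h1 := congrArg φ hk
    rw [map_zpow, hφval, map_mul, map_mul, map_inv, hφval] at h1
    have h2 := congrArg Multiplicative.toAdd h1
    simp only [toAdd_zpow, toAdd_mul, toAdd_inv, toAdd_ofAdd, smul_eq_mul, mul_one] at h2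
    omega
  rw [hk1, zpow_one] at hk
  have hts : g * PresentedGroup.of t * g⁻¹ = PresentedGroup.of s := hk.symm
  -- The odd-edge graph
  set G' : SimpleGraph V :=
    { Adj := fun a b => Γ.graph.Adj a b ∧ Odd (Γ.label a b)
      symm := by
        constructor
        rintro a b ⟨h1, h2⟩
        exact ⟨h1.symm, (Γ.label_symm a b) ▸ h2⟩
      loopless := by constructor; rintro a ⟨h1, _⟩; exact Γ.graph.ne_of_adj h1 rfl } with hG'
  -- The `odd component of s` homomorphism
  have hcomprel : ∀ r ∈ Γ.rels, FreeGroup.lift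
      (fun v : V => if G'.Reachable s v then Multiplicative.ofAdd (1 : ℤ) else 1) r = 1 := by
    rintro r ⟨a, b, hadj, rfl⟩
    rw [map_mul, map_inv, altProd_map, altProd_map, FreeGroup.lift_apply_of, FreeGroup.lift_apply_of,
      altProd_comm, altProd_comm, mul_inv_eq_one]
    rcases Nat.even_or_odd (Γ.label a b) with hev | hodd
    · have h2 : (Γ.label a b + 1) / 2 = Γ.label a b / 2 := by
        obtain ⟨c, hc⟩ := hev; omega
      rw [h2, mul_comm]
    · have hadj' : G'.Adj a b := ⟨hadj, hodd⟩
      have hfab : (if G'.Reachable s a then Multiplicative.ofAdd (1 : ℤ) else 1) =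
          (if G'.Reachable s b then Multiplicative.ofAdd (1 : ℤ) else 1) := by
        by_cases hra : G'.Reachable s a
        · rw [if_pos hra, if_pos (hra.trans hadj'.reachable)]
        · rw [if_neg hra, if_neg (fun hrb => hra (hrb.trans hadj'.symm.reachable))]
      rw [hfab, mul_comm]
  set ψ : ArtinGroup Γ →* Multiplicative ℤ := PresentedGroup.toGroup hcomprel with hψ
  have hψval : ∀ v : V, ψ (PresentedGroup.of v) =
      (if G'.Reachable s v then Multiplicative.ofAdd (1 : ℤ) else 1) := fun v =>
    PresentedGroup.toGroup.of hcomprel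
  -- s and t are connected in G'
  have hreach : G'.Reachable s t := by
    by_contra hnr
    have h1 := congrArg ψ hts
    rw [map_mul, map_mul, map_inv, hψval, hψval, if_neg hnr,
      if_pos (SimpleGraph.Reachable.refl (G := G') s), mul_one, mul_inv_cancel] at h1
    have h2 := congrArg Multiplicative.toAdd h1
    simp only [toAdd_one, toAdd_ofAdd] at h2
    exact one_ne_zero h2.symm
  obtain ⟨w⟩ := hreach
  have hadjall : ∀ i : Fin w.length,
      Γ.graph.Adj (w.getVert i.castSucc) (w.getVert i.succ) ∧
        Odd (Γ.label (w.getVert i.castSucc) (w.getVert i.succ)) := fun i =>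
    w.adj_getVert_succ i.isLt
  refine ⟨w.length, fun i => w.getVert i, by simp, by simp, hadjall, ?_⟩
  have hchain := chain_conj Γ w.length (fun i => w.getVert i) hadjall
  simp only [Fin.val_zero, Fin.val_last, SimpleGraph.Walk.getVert_zero,
    SimpleGraph.Walk.getVert_length] at hchain
  beta_reduce
  set W := (List.ofFn fun i : Fin w.length =>
      bigDelta Γ (w.getVert i.castSucc) (w.getVert i.succ)).prod with hW
  -- hchain : W * of t = of s * W
  have hgt : g * PresentedGroup.of t = PresentedGroup.of s * g := by
    rw [← hts]; group
  have hWs : W⁻¹ * PresentedGroup.of s = PresentedGroup.of t * W⁻¹ := by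
    rw [inv_mul_eq_iff_eq_mul, ← mul_assoc, hchain, mul_assoc, mul_inv_cancel, mul_one]
  refine ⟨g * W⁻¹, ?_, by group⟩
  rw [Subgroup.mem_centralizer_iff]
  rintro x hx
  rw [Set.mem_singleton_iff] at hx
  subst hx
  calc PresentedGroup.of s * (g * W⁻¹)
      = (PresentedGroup.of s * g) * W⁻¹ := by rw [mul_assoc]
    _ = (g * PresentedGroup.of t) * W⁻¹ := by rw [← hgt]
    _ = g * (W⁻¹ * PresentedGroup.of s) := by rw [hWs, mul_assoc]
    _ = g * W⁻¹ * PresentedGroup.of s := by rw [mul_assoc]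
end
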